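/- Let λ > 0 and let E : M → (-∞,+∞] be a proper, lower semicontinuous, λ-geodesically convex functional on a length space (M,d). Then E(v) − inf_{w ∈ M} E(w) ≤ (1/(2λ)) |D⁻E|²(v) for all v ∈ D(E). Moreover, if E has a minimizer φ, then (λ/2) d²(v,φ) ≤ E(v) − E(φ) ≤ (1/(2λ)) |D⁻E|²(v) for all v ∈ D(E). -/

import Mathlib

open MeasureTheory Set Filter Topology Metric
open scoped ENNReal

noncomputable section

/-- The positive part of an extended real number, as an element of `ℝ≥0∞`. -/
def ErealPos (x : EReal) : ℝ≥0∞ := if x = ⊤ then ⊤ else ENNReal.ofReal x.toReal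

/-- `md` is (a.e. on `S`) the metric derivative of the curve `v`. -/
def IsMetricDerivOn {X : Type*} [PseudoMetricSpace X] (v : ℝ → X) (S : Set ℝ)
    (md : ℝ → ℝ) : Prop :=
  ∀ᵐ t ∂(volume.restrict S),
    Tendsto (fun s => dist (v s) (v t) / |s - t|) (nhdsWithin t (S \ {t})) (nhds (md t))

/-- `g` is a strong upper gradient of `E` : along every absolutely continuous curve `w`
with metric derivative `mw`, `g ∘ w` is measurable and
`|E (w t) - E (w s)| ≤ ∫ₛᵗ g(w r) mw r dr`. -/
def StrongUpperGradient {X : Type*} [PseudoMetricSpace X] (E : X → EReal)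
    (g : X → ℝ≥0∞) : Prop :=
  ∀ (a b : ℝ) (w : ℝ → X) (mw : ℝ → ℝ),
    IntegrableOn mw (Ioo a b) →
    (∀ x ∈ Ioo a b, 0 ≤ mw x) →
    IsMetricDerivOn w (Ioo a b) mw →
    (∀ s t : ℝ, a < s → s ≤ t → t < b → dist (w s) (w t) ≤ ∫ r in s..t, mw r) →
    Measurable (fun t => g (w t)) ∧
      ∀ s t : ℝ, a < s → s ≤ t → t < b →
        max (E (w t) - E (w s)) (E (w s) - E (w t)) ≤
          ((∫⁻ r in Ioc s t, g (w r) * ENNReal.ofReal (mw r)) : EReal)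

/-- The time interval `(0, T)` for `T ∈ (0, +∞]`. -/
def ITo (T : EReal) : Set ℝ := {x : ℝ | 0 < x ∧ (x : EReal) < T}

/-- `v` is a `p`-gradient flow (`p`-curve of maximal slope) of `E` with respect to the
strong upper gradient `g` on `(0,T)`, with metric derivative `md`:  `v` is locally
absolutely continuous on `(0,T)`, `E ∘ v` is finite and non-increasing there, and
`d/dt E(v t) ≤ -(1/p') g^{p'}(v t) - (1/p) |v'|^p(t)` for a.e. `t ∈ (0,T)`. -/
def IsPGradientFlow {X : Type*} [PseudoMetricSpace X] (E : X → EReal) (g : X → ℝ≥0∞)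
    (p : ℝ) (T : EReal) (v : ℝ → X) (md : ℝ → ℝ) : Prop :=
  (∀ x ∈ ITo T, 0 ≤ md x) ∧
  (∀ c d : ℝ, 0 < c → c ≤ d → (d : EReal) < T → IntegrableOn md (Ioc c d)) ∧
  (∀ s t : ℝ, 0 < s → s ≤ t → (t : EReal) < T → dist (v s) (v t) ≤ ∫ r in s..t, md r) ∧
  IsMetricDerivOn v (ITo T) md ∧
  (∀ t ∈ ITo T, E (v t) ≠ ⊤ ∧ E (v t) ≠ ⊥) ∧
  AntitoneOn (fun t => (E (v t)).toReal) (ITo T) ∧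
  ∀ᵐ t ∂(volume.restrict (ITo T)), ∃ D : ℝ,
    HasDerivAt (fun s => (E (v s)).toReal) D t ∧ D ≤ 0 ∧
    g (v t) ^ (p / (p - 1)) / ENNReal.ofReal (p / (p - 1)) +
        ENNReal.ofReal (md t ^ p / p) ≤ ENNReal.ofReal (-D)

/-- `f` is absolutely continuous on the interval `[c,d]`. -/
def AbsCont (f : ℝ → ℝ) (c d : ℝ) : Prop :=
  ∀ ε > (0:ℝ), ∃ δ > (0:ℝ), ∀ n : ℕ, ∀ x y : Fin n → ℝ,
    (∀ i, c ≤ x i ∧ x i ≤ y i ∧ y i ≤ d) →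
    (Pairwise fun i j => Disjoint (Ioo (x i) (y i)) (Ioo (x j) (y j))) →
    (∑ i, (y i - x i)) < δ → (∑ i, |f (y i) - f (x i)|) < ε

/-- `X` is a length space: every two points are joined by a constant speed geodesic. -/
def IsLengthSpace (X : Type*) [PseudoMetricSpace X] : Prop :=
  ∀ u w : X, ∃ γ : ℝ → X, γ 0 = u ∧ γ 1 = w ∧
    ∀ s t : ℝ, 0 ≤ s → s ≤ t → t ≤ 1 → dist (γ s) (γ t) = (t - s) * dist u w

/-- `E` is `lam`-geodesically convex. -/
def GeodesicConvexWith {X : Type*} [PseudoMetricSpace X] (E : X → EReal) (lam : ℝ) : Prop :=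
  ∀ u w : X, E u ≠ ⊤ → E w ≠ ⊤ → ∃ γ : ℝ → X, γ 0 = u ∧ γ 1 = w ∧
    (∀ s t : ℝ, 0 ≤ s → s ≤ t → t ≤ 1 → dist (γ s) (γ t) = (t - s) * dist u w) ∧
    ∀ t : ℝ, 0 ≤ t → t ≤ 1 →
      E (γ t) ≤ ((1 - t : ℝ) : EReal) * E u + ((t : ℝ) : EReal) * E w -
        ((lam / 2 * (t * (1 - t)) * dist u w ^ 2 : ℝ) : EReal)

/-- The descending slope `|D⁻E|(u) = limsup_{w → u} (E u - E w)⁺ / d(u,w)`. -/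
def descSlope {X : Type*} [PseudoMetricSpace X] (E : X → EReal) (u : X) : ℝ≥0∞ :=
  Filter.limsup (fun w => ErealPos (E u - E w) / ENNReal.ofReal (dist u w))
    (nhdsWithin u {u}ᶜ)

lemma erealPos_coe (x : ℝ) : ErealPos (x : EReal) = ENNReal.ofReal x := by
  simp [ErealPos]

lemma slope_lb {X : Type*} [MetricSpace X] {E : X → EReal} {lam : ℝ}
    (hbot : ∀ x, E x ≠ ⊥) (hconv : GeodesicConvexWith E lam)
    {v w : X} (hv : E v ≠ ⊤) (hw : E w ≠ ⊤) (hne : v ≠ w) :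
    ENNReal.ofReal (((E v).toReal - (E w).toReal) / dist v w + lam / 2 * dist v w)
      ≤ descSlope E v := by
  obtain ⟨γ, h0, h1, hdγ, hc⟩ := hconv v w hv hw
  set a := (E v).toReal with ha
  set b := (E w).toReal with hb
  set d := dist v w with hd
  have hd0 : 0 < d := dist_pos.2 hne
  have hEv : ((a : ℝ) : EReal) = E v := EReal.coe_toReal hv (hbot v)
  have hEw : ((b : ℝ) : EReal) = E w := EReal.coe_toReal hw (hbot w)
  set q : ℝ → ℝ := fun t => (a - b) / d + lam / 2 * (1 - t) * d with hq
  set F : X → ℝ≥0∞ := fun u => ErealPos (E v - E u) / ENNReal.ofReal (dist v u) with hF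
  have hIoo : ∀ᶠ t in 𝓝[>] (0:ℝ), t ∈ Ioo (0:ℝ) 1 :=
    Ioo_mem_nhdsGT one_pos
  have key : ∀ t ∈ Ioo (0:ℝ) 1, dist v (γ t) = t * d ∧ γ t ≠ v ∧
      ENNReal.ofReal (q t) ≤ F (γ t) := by
    intro t ht
    have hdist : dist v (γ t) = t * d := by
      have h2 := hdγ 0 t le_rfl ht.1.le ht.2.le
      rw [h0] at h2; simpa using h2
    have hγne : γ t ≠ v := by
      intro h
      rw [h, dist_self] at hdist
      nlinarith [ht.1]
    refine ⟨hdist, hγne, ?_⟩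
    have hconvt := hc t ht.1.le ht.2.le
    rw [← hEv, ← hEw] at hconvt
    have hRHS : ((1 - t : ℝ) : EReal) * ((a:ℝ):EReal) + ((t:ℝ):EReal) * ((b:ℝ):EReal) -
        ((lam / 2 * (t * (1 - t)) * d ^ 2 : ℝ) : EReal)
        = (((1-t)*a + t*b - lam/2*(t*(1-t))*d^2 : ℝ) : EReal) := by
      norm_cast
    rw [hRHS] at hconvt
    have hγtop : E (γ t) ≠ ⊤ := fun h => by
      rw [h] at hconvt
      exact EReal.coe_ne_top _ (top_le_iff.1 hconvt)
    set c := (E (γ t)).toReal with hcdef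
    have hEγ : ((c : ℝ) : EReal) = E (γ t) := EReal.coe_toReal hγtop (hbot _)
    have hcle : c ≤ (1-t)*a + t*b - lam/2*(t*(1-t))*d^2 := by
      have := EReal.toReal_le_toReal hconvt (hbot _) (EReal.coe_ne_top _)
      rwa [EReal.toReal_coe] at this
    have hnum : a - c ≥ t * d * q t := by
      have hqe : t * d * q t = t*(a-b) + lam/2*t*(1-t)*d^2 := by
        have := hd0.ne'
        simp only [hq]
        field_simp
      rw [hqe]
      nlinarith [ht.1]
    have hFeq : F (γ t) = ENNReal.ofReal (a - c) / ENNReal.ofReal (t * d) := by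
      rw [hF]
      simp only
      rw [← hEv, ← hEγ, ← EReal.coe_sub, hdist, erealPos_coe]
    rw [hFeq]
    have htd : 0 < t * d := mul_pos ht.1 hd0
    rw [← ENNReal.ofReal_div_of_pos htd]
    apply ENNReal.ofReal_le_ofReal
    rw [le_div_iff₀ htd]
    nlinarith [hnum]
  have htend : Tendsto γ (𝓝[>] (0:ℝ)) (𝓝[{v}ᶜ] v) := by
    rw [tendsto_nhdsWithin_iff]
    constructor
    · rw [tendsto_iff_dist_tendsto_zero]
      have h2 : Tendsto (fun t : ℝ => t * d) (𝓝[>] (0:ℝ)) (𝓝 0) := by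
        have h3 : Tendsto (fun t : ℝ => t * d) (𝓝 0) (𝓝 (0 * d)) :=
          (continuous_id.mul (continuous_const (y := d))).tendsto (0:ℝ)
        simpa using h3.mono_left nhdsWithin_le_nhds
      refine h2.congr' ?_
      filter_upwards [hIoo] with t ht
      rw [dist_comm]
      exact ((key t ht).1).symm
    · filter_upwards [hIoo] with t ht
      exact (key t ht).2.1
  have hq0 : Tendsto (fun t => ENNReal.ofReal (q t)) (𝓝[>] (0:ℝ))
      (𝓝 (ENNReal.ofReal ((a - b) / d + lam / 2 * d))) := by
    have hqc : Continuous q := by fun_prop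
    have h3 := (ENNReal.continuous_ofReal.comp hqc).tendsto 0
    have h4 := h3.mono_left (nhdsWithin_le_nhds (s := Ioi (0:ℝ)))
    simpa [hq, Function.comp_def] using h4
  have h1 : ENNReal.ofReal ((a-b)/d + lam/2*d) ≤ liminf (fun t => F (γ t)) (𝓝[>] (0:ℝ)) := by
    rw [← hq0.liminf_eq]
    refine liminf_le_liminf ?_
    · filter_upwards [hIoo] with t ht
      exact (key t ht).2.2
  have h2 : liminf (fun t => F (γ t)) (𝓝[>] (0:ℝ)) ≤ limsup (fun t => F (γ t)) (𝓝[>] (0:ℝ)) :=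
    liminf_le_limsup
  have h3 : limsup (fun t => F (γ t)) (𝓝[>] (0:ℝ)) ≤ descSlope E v := by
    rw [show (fun t => F (γ t)) = F ∘ γ from rfl, limsup_comp]
    exact limsup_le_limsup_of_le htend
  exact h1.trans (h2.trans h3)

lemma slope_sq {X : Type*} [MetricSpace X] {E : X → EReal} {lam : ℝ} (hlam : 0 < lam)
    (hbot : ∀ x, E x ≠ ⊥) (hconv : GeodesicConvexWith E lam)
    {v w : X} (hv : E v ≠ ⊤) (hw : E w ≠ ⊤) :
    E v - E w ≤ ((descSlope E v ^ 2 / ENNReal.ofReal (2 * lam) : ℝ≥0∞) : EReal) := by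
  set a := (E v).toReal with ha
  set b := (E w).toReal with hb
  have hEv : ((a : ℝ) : EReal) = E v := EReal.coe_toReal hv (hbot v)
  have hEw : ((b : ℝ) : EReal) = E w := EReal.coe_toReal hw (hbot w)
  rw [← hEv, ← hEw, ← EReal.coe_sub]
  by_cases hab : a - b ≤ 0
  · exact le_trans (by exact_mod_cast hab : ((a - b : ℝ) : EReal) ≤ (0:EReal))
      (EReal.coe_ennreal_nonneg _)
  push_neg at hab
  have hne : v ≠ w := by
    intro h; rw [h] at ha; rw [ha, ← hb] at hab; simp at hab
  have hA := slope_lb hbot hconv hv hw hne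
  by_cases htop : descSlope E v = ⊤
  · rw [htop]
    rw [ENNReal.top_pow two_ne_zero, ENNReal.top_div_of_ne_top ENNReal.ofReal_ne_top]
    simp
  set s := (descSlope E v).toReal with hs
  have hsE : descSlope E v = ENNReal.ofReal s := (ENNReal.ofReal_toReal htop).symm
  have hs0 : 0 ≤ s := ENNReal.toReal_nonneg
  set d := dist v w with hd
  have hd0 : 0 < d := dist_pos.2 hne
  have hq0s : (a - b) / d + lam / 2 * d ≤ s := by
    rw [hsE] at hA
    exact (ENNReal.ofReal_le_ofReal_iff hs0).1 hA
  rw [hsE, ← ENNReal.ofReal_pow hs0, ← ENNReal.ofReal_div_of_pos (by positivity),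
    EReal.coe_ennreal_ofReal]
  have hmax : a - b ≤ max (s ^ 2 / (2 * lam)) 0 := by
    refine le_trans ?_ (le_max_left _ _)
    have h1 : a - b + lam / 2 * d ^ 2 ≤ s * d := by
      have h2 := mul_le_mul_of_nonneg_right hq0s hd0.le
      have h3 : ((a - b) / d + lam / 2 * d) * d = a - b + lam / 2 * d ^ 2 := by
        field_simp
      rw [h3] at h2
      exact h2
    rw [le_div_iff₀ (by positivity)]
    have hP : (0:ℝ) ≤ a - b + lam / 2 * d ^ 2 := by positivity
    nlinarith [mul_self_le_mul_self hP h1, sq_nonneg (a - b - lam / 2 * d ^ 2),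
      mul_pos hd0 hd0, hab]
  exact_mod_cast hmax

lemma min_lb {X : Type*} [MetricSpace X] {E : X → EReal} {lam : ℝ}
    (hbot : ∀ x, E x ≠ ⊥) (hconv : GeodesicConvexWith E lam)
    {φ w : X} (hmin : ∀ u, E φ ≤ E u) (hφ : E φ ≠ ⊤) (hw : E w ≠ ⊤) :
    ((lam / 2 * dist w φ ^ 2 : ℝ) : EReal) ≤ E w - E φ := by
  obtain ⟨γ, h0, h1, hdγ, hc⟩ := hconv w φ hw hφ
  set a := (E w).toReal with ha
  set b := (E φ).toReal with hb
  set d := dist w φ with hd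
  have hEw : ((a : ℝ) : EReal) = E w := EReal.coe_toReal hw (hbot w)
  have hEφ : ((b : ℝ) : EReal) = E φ := EReal.coe_toReal hφ (hbot φ)
  have key : ∀ t ∈ Ioo (0:ℝ) 1, lam / 2 * t * d ^ 2 ≤ a - b := by
    intro t ht
    have hconvt := hc t ht.1.le ht.2.le
    rw [← hEw, ← hEφ] at hconvt
    have hRHS : ((1 - t : ℝ) : EReal) * ((a:ℝ):EReal) + ((t:ℝ):EReal) * ((b:ℝ):EReal) -
        ((lam / 2 * (t * (1 - t)) * d ^ 2 : ℝ) : EReal)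
        = (((1-t)*a + t*b - lam/2*(t*(1-t))*d^2 : ℝ) : EReal) := by
      norm_cast
    rw [hRHS] at hconvt
    have hlow : ((b : ℝ) : EReal) ≤ (((1-t)*a + t*b - lam/2*(t*(1-t))*d^2 : ℝ) : EReal) :=
      le_trans (hEφ ▸ hmin (γ t)) hconvt
    have hreal : b ≤ (1-t)*a + t*b - lam/2*(t*(1-t))*d^2 := by exact_mod_cast hlow
    have ht1 : 0 < 1 - t := by linarith [ht.2]
    nlinarith [ht1, ht.1]
  have hlim : Tendsto (fun t : ℝ => lam / 2 * t * d ^ 2) (𝓝[<] (1:ℝ)) (𝓝 (lam / 2 * d ^ 2)) := by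
    have hcont : Continuous (fun t : ℝ => lam / 2 * t * d ^ 2) := by fun_prop
    have h2 := (hcont.tendsto 1).mono_left (nhdsWithin_le_nhds (s := Iio (1:ℝ)))
    simpa using h2
  have hfin : lam / 2 * d ^ 2 ≤ a - b := by
    refine le_of_tendsto hlim ?_
    filter_upwards [Ioo_mem_nhdsLT_of_mem (⟨one_pos, le_rfl⟩ : (1:ℝ) ∈ Ioc (0:ℝ) 1)] with t ht
    exact key t ht
  rw [← hEw, ← hEφ, ← EReal.coe_sub]
  exact_mod_cast hfin

/-- For a proper lower semicontinuous `lam`-geodesically convex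
functional with `lam > 0`: `E v − inf E ≤ |D⁻E|²(v)/(2 lam)` on `D(E)`, and if `φ` is a
minimizer then `(lam/2) d²(v,φ) ≤ E v − E φ ≤ |D⁻E|²(v)/(2 lam)` on `D(E)`. -/
theorem stmt9 {X : Type*} [MetricSpace X] (hlen : IsLengthSpace X)
    (E : X → EReal) (lam : ℝ) (hlam : 0 < lam)
    (hproper : ∃ x, E x ≠ ⊤) (hbot : ∀ x, E x ≠ ⊥)
    (hlsc : LowerSemicontinuous E)
    (hconv : GeodesicConvexWith E lam) :
    (∀ w : X, E w ≠ ⊤ →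
      E w - (⨅ u : X, E u) ≤
        ((descSlope E w ^ 2 / ENNReal.ofReal (2 * lam) : ℝ≥0∞) : EReal)) ∧
      ∀ φ : X, (∀ u, E φ ≤ E u) → ∀ w : X, E w ≠ ⊤ →
        ((lam / 2 * dist w φ ^ 2 : ℝ) : EReal) ≤ E w - E φ ∧
          E w - E φ ≤ ((descSlope E w ^ 2 / ENNReal.ofReal (2 * lam) : ℝ≥0∞) : EReal) := by
  constructor
  · intro w hw
    set S : ℝ≥0∞ := descSlope E w ^ 2 / ENNReal.ofReal (2 * lam) with hSdef
    have hB : ∀ u : X, E u ≠ ⊤ → E w - E u ≤ (S : EReal) := fun u hu =>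
      slope_sq hlam hbot hconv hw hu
    have hEw : (((E w).toReal : ℝ) : EReal) = E w := EReal.coe_toReal hw (hbot w)
    set a := (E w).toReal with ha
    have hIne : (⨅ u : X, E u) ≠ ⊤ := by
      obtain ⟨x, hx⟩ := hproper
      intro h
      exact hx (top_le_iff.1 (h ▸ iInf_le (fun u : X => E u) x))
    by_cases hSt : S = ⊤
    · rw [hSt]
      simp [EReal.coe_ennreal_top]
    have hScoe : ((S.toReal : ℝ) : EReal) = (S : EReal) := by
      rw [← EReal.toReal_coe_ennreal]
      exact EReal.coe_toReal (by simpa using hSt) (EReal.coe_ennreal_ne_bot _)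
    set r := S.toReal with hr
    have hrall : ∀ u : X, ((a - r : ℝ) : EReal) ≤ E u := by
      intro u
      by_cases hu : E u = ⊤
      · rw [hu]; exact le_top
      have h2 := hB u hu
      have hEu : (((E u).toReal : ℝ) : EReal) = E u := EReal.coe_toReal hu (hbot u)
      rw [← hEw, ← hEu, ← EReal.coe_sub, ← hScoe] at h2
      have h3 : a - (E u).toReal ≤ r := by exact_mod_cast h2
      rw [← hEu]
      exact_mod_cast by linarith
    have hI : ((a - r : ℝ) : EReal) ≤ ⨅ u : X, E u := le_iInf hrall
    have hIbot : (⨅ u : X, E u) ≠ ⊥ := by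
      intro h
      rw [h, le_bot_iff] at hI
      exact EReal.coe_ne_bot _ hI
    have hIco : (((⨅ u : X, E u).toReal : ℝ) : EReal) = ⨅ u : X, E u :=
      EReal.coe_toReal hIne hIbot
    set m := (⨅ u : X, E u).toReal with hm
    rw [← hEw, ← hIco, ← EReal.coe_sub, ← hScoe]
    have hgoal : a - m ≤ r := by
      refine le_of_forall_pos_le_add ?_
      intro ε hε
      have hlt : (⨅ u : X, E u) < ((m + ε : ℝ) : EReal) := by
        rw [← hIco]
        exact_mod_cast (by linarith : m < m + ε)
      obtain ⟨u, hu⟩ := iInf_lt_iff.1 hlt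
      have hut : E u ≠ ⊤ := by
        intro h; rw [h] at hu; exact not_top_lt hu
      have hEu : (((E u).toReal : ℝ) : EReal) = E u := EReal.coe_toReal hut (hbot u)
      have h2 := hB u hut
      rw [← hEw, ← hEu, ← EReal.coe_sub, ← hScoe] at h2
      have h3 : a - (E u).toReal ≤ r := by exact_mod_cast h2
      have h4 : (E u).toReal < m + ε := by
        rw [← hEu] at hu
        exact_mod_cast hu
      linarith
    exact_mod_cast hgoal
  · intro φ hmin w hw
    have hφ : E φ ≠ ⊤ := by
      obtain ⟨x, hx⟩ := hproper
      intro h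
      exact hx (top_le_iff.1 (h ▸ hmin x))
    exact ⟨min_lb hbot hconv hmin hφ hw, slope_sq hlam hbot hconv hw hφ⟩
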